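/- If Λ ⊊ Σ_A is a shift space with Λ ≠ {Ø}, then Λ is not a finitely defined set in Σ_A. -/

import Mathlib

namespace OTW

/-- The Ott-Tomforde-Willis full shift `Σ_A`: sequences over `A ∪ {õ}` (with `õ = none`)
such that once the empty letter `õ` appears, it repeats forever. -/
@[ext]
structure FullShift (A : Type*) where
  val : ℕ → Option A
  tail : ∀ i, val i = none → val (i + 1) = none

variable {A B : Type*}

/-- The shift map `σ`. -/
def shiftMap (x : FullShift A) : FullShift A :=
  ⟨fun i => x.val (i + 1), fun i hi => x.tail (i + 1) hi⟩

/-- The empty sequence `Ø`. -/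
def emptySeq : FullShift A :=
  ⟨fun _ => none, fun _ _ => rfl⟩

theorem val_none_mono (x : FullShift A) :
    ∀ {k m : ℕ}, k ≤ m → x.val k = none → x.val m = none := by
  intro k m h hk
  induction m, h using Nat.le_induction with
  | base => exact hk
  | succ m hm ih => exact x.tail m ih

/-- The finite sequence determined by a word `w : List A`. -/
def finSeq (w : List A) : FullShift A where
  val i := (w.drop i).head?
  tail := by
    intro i hi
    rw [List.head?_eq_none_iff] at hi ⊢
    rw [List.drop_eq_nil_iff] at hi ⊢
    omega

/-- Generalized cylinder `Z(w, F)`. -/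
def Zcyl (w : List A) (F : Finset A) : Set (FullShift A) :=
  {x | (∀ i : Fin w.length, x.val i = some (w.get i)) ∧ ∀ a ∈ F, x.val w.length ≠ some a}

/-- The topology on `Σ_A` generated by the generalized cylinders. -/
instance : TopologicalSpace (FullShift A) :=
  TopologicalSpace.generateFrom {S | ∃ (w : List A) (F : Finset A), S = Zcyl w F}

/-- The letters `L_Λ` used by sequences of `Λ`. -/
def letters (Λ : Set (FullShift A)) : Set A :=
  {a | ∃ x ∈ Λ, ∃ i, x.val i = some a}

/-- `w` is a (fully lettered) block appearing in some sequence of `Λ`. -/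
def IsBlock (Λ : Set (FullShift A)) (w : List A) : Prop :=
  ∃ x ∈ Λ, ∃ n, ∀ i : Fin w.length, x.val (n + i) = some (w.get i)

/-- Ott-Tomforde-Willis shift space: closed, shift invariant, with the
infinite extension property. -/
def IsShiftSpace (Λ : Set (FullShift A)) : Prop :=
  IsClosed Λ ∧ (∀ x ∈ Λ, shiftMap x ∈ Λ) ∧
    (emptySeq ∈ Λ ↔ (letters Λ).Infinite) ∧
    (∀ w : List A, w ≠ [] → (finSeq w ∈ Λ ↔ {b : A | IsBlock Λ (w ++ [b])}.Infinite))

/-- `x` begins with the block `b` (a word over the extended alphabet `A ∪ {õ}`). -/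
def Prefixed (x : FullShift A) (b : List (Option A)) : Prop :=
  ∀ i : Fin b.length, x.val i = b.get i

/-- `(P, Q)` is a representation of `C` as a finitely defined set in `Λ`:
membership in `C` is witnessed by an initial block in `P`, and membership in the
complement by an initial block in `Q`. -/
def FDRep (Λ C : Set (FullShift A)) (P Q : Set (List (Option A))) : Prop :=
  (∀ b ∈ P, b ≠ []) ∧ (∀ b ∈ Q, b ≠ []) ∧
    C = {x ∈ Λ | ∃ b ∈ P, Prefixed x b} ∧
    Λ \ C = {x ∈ Λ | ∃ b ∈ Q, Prefixed x b}

/-- `C` is a finitely defined set in `Λ`. -/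
def FinitelyDefinedIn (Λ C : Set (FullShift A)) : Prop :=
  ∃ P Q, FDRep Λ C P Q

/-- `S` is a finite (possibly empty) union of generalized cylinders of `Λ`. -/
def IsFinUnionCyl (Λ S : Set (FullShift A)) : Prop :=
  ∃ (n : ℕ) (w : Fin n → List A) (F : Fin n → Finset A),
    S = Λ ∩ ⋃ i, Zcyl (w i) (F i)

/-- `Φ` is the sliding block code determined by the partition `{C_a}` of `Λ` into
finitely defined sets, with `C_õ` shift invariant. -/
def IsSBCWith (Λ : Set (FullShift A)) (Φ : FullShift A → FullShift B)
    (C : Option B → Set (FullShift A)) : Prop :=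
  (∀ a, C a ⊆ Λ) ∧ (∀ x ∈ Λ, ∃! a, x ∈ C a) ∧
    (∀ a, FinitelyDefinedIn Λ (C a)) ∧
    (∀ x ∈ C none, shiftMap x ∈ C none) ∧
    (∀ x ∈ Λ, ∀ n : ℕ, shiftMap^[n] x ∈ C ((Φ x).val n))

/-- Sliding block code. -/
def IsSlidingBlockCode (Λ : Set (FullShift A)) (Φ : FullShift A → FullShift B) : Prop :=
  ∃ C, IsSBCWith Λ Φ C

/-- Row-finite shift: every letter has a finite follower set. -/
def RowFinite (Λ : Set (FullShift A)) : Prop :=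
  ∀ a ∈ letters Λ, {b : A | IsBlock Λ [a, b]}.Finite

/-- The `M`-th higher block code `Ξ^(M)`. -/
noncomputable def higherBlock (M : ℕ) (x : FullShift A) : FullShift (Fin M → A) where
  val i := if h : ∀ j : Fin M, (x.val (i + j)).isSome then
      some (fun j => (x.val (i + j)).get (h j)) else none
  tail := by
    intro i hi
    try dsimp only at hi ⊢
    have h1 : ¬ ∀ j : Fin M, (x.val (i + j)).isSome := by
      intro h
      rw [dif_pos h] at hi
      exact absurd hi (Option.some_ne_none _)
    push_neg at h1
    obtain ⟨j, hj⟩ := h1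
    have hjn : x.val (i + j) = none := Option.not_isSome_iff_eq_none.mp hj
    have hM : (0 : ℕ) < M := j.pos
    rw [dif_neg]
    intro h2
    have hsome := h2 ⟨M - 1, by omega⟩
    have hnone : x.val (i + 1 + ((⟨M - 1, by omega⟩ : Fin M) : ℕ)) = none := by
      apply val_none_mono x ?_ hjn
      have := j.isLt
      simp only [Fin.val_mk]
      omega
    rw [hnone] at hsome
    simp at hsome


theorem shiftIter_val (x : FullShift A) (n i : ℕ) :
    (shiftMap^[n] x).val i = x.val (i + n) := by
  induction n generalizing x i with
  | zero => rfl
  | succ n ih =>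
    rw [Function.iterate_succ_apply, ih]
    rfl

theorem mem_shiftIter {Λ : Set (FullShift A)} (hσ : ∀ x ∈ Λ, shiftMap x ∈ Λ) :
    ∀ n, ∀ x ∈ Λ, shiftMap^[n] x ∈ Λ := by
  intro n
  induction n with
  | zero => exact fun x hx => hx
  | succ n ih =>
    intro x hx
    rw [Function.iterate_succ_apply]
    exact ih _ (hσ x hx)

theorem ext_val {x y : FullShift A} (h : ∀ i, x.val i = y.val i) : x = y :=
  FullShift.ext (funext h)

theorem finSeq_val (w : List A) (i : ℕ) : (finSeq w).val i = w[i]? :=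
  List.head?_drop

/-- a nonempty shift space `Λ ⊊ Σ_A` with `Λ ≠ {Ø}` is not a finitely
defined set in `Σ_A`. -/
theorem shiftSpace_not_finitelyDefined {A : Type*} [Countable A] [Infinite A]
    (Λ : Set (FullShift A)) (hΛ : IsShiftSpace Λ) (hne : Λ.Nonempty)
    (hproper : Λ ≠ Set.univ) (hnotO : Λ ≠ {emptySeq}) :
    ¬ FinitelyDefinedIn Set.univ Λ := by
  classical
  rintro ⟨P, Q, hP, hQ, hC, hQC⟩
  -- a point outside Λ
  obtain ⟨z₀, hz₀⟩ : ∃ z, z ∉ Λ := by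
    rw [Ne, Set.eq_univ_iff_forall] at hproper
    push_neg at hproper
    exact hproper
  have hσ := hΛ.2.1
  -- Step 1: every element of Λ eventually hits `none`
  have hnone : ∀ x ∈ Λ, ∃ k, x.val k = none := by
    intro x hx
    by_contra h
    push_neg at h
    have hx' : x ∈ {x ∈ (Set.univ : Set (FullShift A)) | ∃ b ∈ P, Prefixed x b} := by
      rw [← hC]; exact hx
    obtain ⟨-, p, hpP, hpre⟩ := hx'
    set m := p.length with hm
    have hm0 : 0 < m := List.length_pos_iff.mpr (hP p hpP)
    let y : FullShift A := ⟨fun i => if i < m then x.val i else z₀.val (i - m), by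
      intro i hi
      by_cases him : i < m
      · simp only [if_pos him] at hi
        exact absurd hi (h i)
      · simp only [if_neg him] at hi
        have h1 : ¬ i + 1 < m := by omega
        simp only [if_neg h1]
        have h2 : i + 1 - m = (i - m) + 1 := by omega
        rw [h2]
        exact z₀.tail _ hi⟩
    have hy : y ∈ Λ := by
      rw [hC]
      refine ⟨Set.mem_univ _, p, hpP, fun i => ?_⟩
      have hlt : (i : ℕ) < m := i.isLt
      show (if (i : ℕ) < m then x.val i else _) = p.get i
      rw [if_pos hlt]
      exact hpre i
    have hyz : shiftMap^[m] y = z₀ := by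
      apply ext_val
      intro i
      rw [shiftIter_val]
      show (if i + m < m then _ else z₀.val (i + m - m)) = z₀.val i
      rw [if_neg (by omega)]
      congr 1
      omega
    exact hz₀ (hyz ▸ mem_shiftIter hσ m y hy)
  -- Step 2: every element of Λ is a finite sequence
  have hword : ∀ z ∈ Λ, ∃ v : List A, finSeq v = z := by
    intro z hz
    have hex := hnone z hz
    set K := Nat.find hex with hK
    have hKnone : z.val K = none := Nat.find_spec hex
    have hKmin : ∀ j, j < K → (z.val j).isSome := by
      intro j hj
      exact Option.ne_none_iff_isSome.mp (Nat.find_min hex hj)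
    refine ⟨List.ofFn (fun i : Fin K => (z.val i).get (hKmin i i.isLt)), ?_⟩
    apply ext_val
    intro i
    rw [finSeq_val]
    by_cases hi : i < K
    · rw [List.getElem?_eq_getElem (by simpa using hi)]
      simp only [List.getElem_ofFn]
      exact Option.some_get _
    · rw [List.getElem?_eq_none (by simpa using hi)]
      exact (val_none_mono z (by omega) hKnone).symm
  -- Step 3: extension of words of Λ
  have hext : ∀ v : List A, v ≠ [] → finSeq v ∈ Λ →
      ∃ v' : List A, v.length < v'.length ∧
        (∀ i, (h : i < v.length) → v'[i]? = some (v[i]'h)) ∧ finSeq v' ∈ Λ := by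
    intro v hv hvΛ
    obtain ⟨c, y, hy, n, hyn⟩ := ((hΛ.2.2.2 v hv).mp hvΛ).nonempty
    set z := shiftMap^[n] y with hzdef
    have hzΛ : z ∈ Λ := mem_shiftIter hσ n y hy
    obtain ⟨v', hv'⟩ := hword z hzΛ
    have hzv : ∀ i, z.val i = v'[i]? := by
      intro i
      rw [← hv']
      exact finSeq_val v' i
    have hzi : ∀ i, (h : i < v.length + 1) →
        z.val i = some ((v ++ [c])[i]'(by simp; omega)) := by
      intro i h
      have h' : i < (v ++ [c]).length := by simp; omega
      have := hyn ⟨i, h'⟩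
      rw [hzdef, shiftIter_val]
      simpa [Nat.add_comm] using this
    have hlen : v.length < v'.length := by
      have h1 := hzi v.length (by omega)
      rw [hzv] at h1
      exact (List.getElem?_eq_some_iff.mp h1).1
    refine ⟨v', hlen, fun i hi => ?_, hv' ▸ hzΛ⟩
    rw [← hzv, hzi i (by omega)]
    congr 1
    exact List.getElem_append_left hi
  -- starting word
  obtain ⟨x₀, hx₀Λ, hx₀ne⟩ : ∃ x ∈ Λ, x ≠ emptySeq := by
    by_contra h
    push_neg at h
    exact hnotO (Set.eq_singleton_iff_nonempty_unique_mem.mpr ⟨hne, h⟩)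
  obtain ⟨v₀, hv₀⟩ := hword x₀ hx₀Λ
  have hv₀ne : v₀ ≠ [] := by
    intro h
    apply hx₀ne
    rw [← hv₀, h]
    apply ext_val
    intro i
    rw [finSeq_val]
    simp [emptySeq]
  have hv₀Λ : finSeq v₀ ∈ Λ := hv₀ ▸ hx₀Λ
  -- the chain of words
  let T := {v : List A // v ≠ [] ∧ finSeq v ∈ Λ}
  have step : ∀ p : T, ∃ q : T, p.1.length < q.1.length ∧
      ∀ i, i < p.1.length → q.1[i]? = p.1[i]? := by
    rintro ⟨v, hvne, hvΛ⟩
    obtain ⟨v', h1, h2, h3⟩ := hext v hvne hvΛ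
    refine ⟨⟨v', ?_, h3⟩, h1, fun i hi => ?_⟩
    · intro h
      rw [h] at h1
      simp at h1
    · rw [h2 i hi, List.getElem?_eq_getElem hi]
  choose stepf hstep1 hstep2 using step
  let V : ℕ → T := fun n => Nat.rec ⟨v₀, hv₀ne, hv₀Λ⟩ (fun _ p => stepf p) n
  have hVsucc : ∀ n, V (n + 1) = stepf (V n) := fun n => rfl
  have hVmono : ∀ n, (V n).1.length < (V (n + 1)).1.length := fun n => hstep1 (V n)
  have hVlen : ∀ n, n < (V n).1.length := by
    intro n
    induction n with
    | zero => exact List.length_pos_iff.mpr (V 0).2.1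
    | succ n ih => have := hVmono n; omega
  have hVle : ∀ n m, n ≤ m → (V n).1.length ≤ (V m).1.length := by
    intro n m hnm
    induction m, hnm using Nat.le_induction with
    | base => exact le_refl _
    | succ m hm ih => have := hVmono m; omega
  have hVcomp : ∀ n m, n ≤ m → ∀ i, i < (V n).1.length → (V m).1[i]? = (V n).1[i]? := by
    intro n m hnm
    induction m, hnm using Nat.le_induction with
    | base => intro i _; rfl
    | succ m hm ih =>
      intro i hi
      have hi' : i < (V m).1.length := lt_of_lt_of_le hi (hVle n m hm)
      rw [hVsucc, hstep2 (V m) i hi', ih i hi]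
  -- the limit letters
  have hflt : ∀ i : ℕ, i < (V (i + 1)).1.length := fun i => by have := hVlen (i + 1); omega
  let f : ℕ → A := fun i => (V (i + 1)).1[i]'(hflt i)
  have hfcomp : ∀ m i, i < m → (V m).1[i]? = some (f i) := by
    intro m i hi
    have h1 : (V m).1[i]? = (V (i + 1)).1[i]? := hVcomp (i + 1) m hi i (hflt i)
    rw [h1, List.getElem?_eq_getElem (hflt i)]
  -- the infinite sequence ξ
  let ξ : FullShift A := ⟨fun i => some (f i), fun i hi => (Option.some_ne_none _ hi).elim⟩
  have hξ : ξ ∉ Λ := by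
    intro h
    obtain ⟨k, hk⟩ := hnone ξ h
    exact Option.some_ne_none _ hk
  have hξQ : ξ ∈ {x ∈ (Set.univ : Set (FullShift A)) | ∃ b ∈ Q, Prefixed x b} := by
    rw [← hQC]
    exact ⟨Set.mem_univ _, hξ⟩
  obtain ⟨-, q, hqQ, hqpre⟩ := hξQ
  set m := q.length with hmq
  have hm0 : 0 < m := List.length_pos_iff.mpr (hQ q hqQ)
  -- finSeq (V m) is prefixed by q, hence outside Λ: contradiction
  have hpre : Prefixed (finSeq (V m).1) q := by
    intro i
    have hlt : (i : ℕ) < m := i.isLt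
    rw [← hqpre i]
    show (finSeq (V m).1).val i = ξ.val i
    rw [finSeq_val, hfcomp m i hlt]
  have : finSeq (V m).1 ∈ Set.univ \ Λ := by
    rw [hQC]
    exact ⟨Set.mem_univ _, q, hqQ, hpre⟩
  exact this.2 (V m).2.2

end OTW
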